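/- arXiv:1411.1569 — 2 statements merged into one kernel-verified Lean document; each statement's English description precedes it below -/
import Mathlib

section
/- For M×M positive semidefinite Hermitian matrices A and B, tr(AB) ≥ Σ_{m=1}^M λ_m(A) λ_{M−m+1}(B), where λ_1 ≥ ... ≥ λ_M denote eigenvalues in decreasing order. -/
open Finset Matrix

private lemma rearr_step (M : ℕ) (lam mu : Fin M → ℝ) (σ τ : Equiv.Perm (Fin M))
    (hσ : Antitone (lam ∘ σ)) (hτ : Antitone (mu ∘ τ)) (π : Equiv.Perm (Fin M)) :
    ∑ m : Fin M, lam (σ m) * mu (τ m.rev) ≤ ∑ i : Fin M, lam i * mu (π i) := by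
  have hrhs : ∑ i : Fin M, lam i * mu (π i) = ∑ m : Fin M, lam (σ m) * mu (π (σ m)) :=
    (Equiv.sum_comp σ (fun i => lam i * mu (π i))).symm
  rw [hrhs]
  set f : Fin M → ℝ := fun m => lam (σ m) with hf
  set g : Fin M → ℝ := fun m => mu (τ m.rev) with hg
  have hgmono : Monotone g := fun i j hij => hτ (Fin.rev_le_rev.mpr hij)
  have hanti : Antivary f g := by
    intro i j hij
    have hij' : i ≤ j := by
      by_contra h
      exact absurd (hgmono (le_of_not_ge h)) (not_le.mpr hij)
    exact hσ hij'
  have key := hanti.sum_mul_le_sum_mul_comp_perm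
    (σ := ((σ.trans π).trans τ.symm).trans Fin.revPerm)
  convert key using 2 with m
  case e'_2 => rfl
  case e'_4.a => simp [f, g, Fin.revPerm, Equiv.trans_apply]

open ComplexOrder
theorem trace_mul_ge_sum_ordered_eigenvalues (M : ℕ)
    (A B : Matrix (Fin M) (Fin M) ℂ)
    (hA : A.PosSemidef) (hB : B.PosSemidef)
    (σ τ : Equiv.Perm (Fin M))
    (hσ : Antitone (hA.1.eigenvalues ∘ σ))
    (hτ : Antitone (hB.1.eigenvalues ∘ τ)) :
    ∑ m : Fin M, hA.1.eigenvalues (σ m) * hB.1.eigenvalues (τ m.rev)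
      ≤ ((A * B).trace).re := by
  set U := (hA.1.eigenvectorUnitary : Matrix (Fin M) (Fin M) ℂ) with hU
  set V := (hB.1.eigenvectorUnitary : Matrix (Fin M) (Fin M) ℂ) with hV
  set W := star U * V with hW
  set lam := hA.1.eigenvalues with hlam
  set mu := hB.1.eigenvalues with hmu
  have hUU : U * star U = 1 := (Matrix.mem_unitaryGroup_iff).mp hA.1.eigenvectorUnitary.2
  have hVV : V * star V = 1 := (Matrix.mem_unitaryGroup_iff).mp hB.1.eigenvectorUnitary.2
  have hUU' : star U * U = 1 := (Matrix.mem_unitaryGroup_iff').mp hA.1.eigenvectorUnitary.2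
  have hVV' : star V * V = 1 := (Matrix.mem_unitaryGroup_iff').mp hB.1.eigenvectorUnitary.2
  have key : (A * B).trace
      = (Matrix.diagonal (RCLike.ofReal ∘ lam) * W * Matrix.diagonal (RCLike.ofReal ∘ mu)
          * star W).trace := by
    conv_lhs => rw [hA.1.spectral_theorem, hB.1.spectral_theorem, Unitary.conjStarAlgAut_apply, Unitary.conjStarAlgAut_apply]
    rw [show (U * diagonal (RCLike.ofReal ∘ lam) * star U) * (V * diagonal (RCLike.ofReal ∘ mu) * star V)
        = U * (diagonal (RCLike.ofReal ∘ lam) * star U * (V * diagonal (RCLike.ofReal ∘ mu) * star V)) by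
      simp [Matrix.mul_assoc]]
    rw [Matrix.trace_mul_comm]
    congr 1
    simp [hW, StarMul.star_mul, Matrix.mul_assoc]
  have key2 : (A * B).trace
      = ((∑ i : Fin M, ∑ j : Fin M, lam i * mu j * Complex.normSq (W i j) : ℝ) : ℂ) := by
    rw [key]
    simp only [Matrix.trace, Matrix.diag, Matrix.mul_assoc]
    push_cast
    congr 1 with i
    simp only [Matrix.diagonal_mul]
    simp only [Matrix.mul_apply]
    simp only [Matrix.diagonal_apply, Matrix.star_apply, RCLike.star_def, Function.comp_apply,
      ite_mul, zero_mul, Finset.sum_ite_eq, Finset.mem_univ, if_true]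
    rw [Finset.mul_sum]
    congr 1 with j
    rw [show (RCLike.ofReal (lam i) : ℂ) * (W i j * ((RCLike.ofReal (mu j) : ℂ) * (starRingEnd ℂ) (W i j)))
        = (RCLike.ofReal (lam i) : ℂ) * (RCLike.ofReal (mu j) : ℂ) * (W i j * (starRingEnd ℂ) (W i j)) from by ring]
    rw [Complex.mul_conj]
    norm_cast
    simp [RCLike.ofReal_mul, mul_assoc]
  -- the doubly stochastic matrix
  set S : Matrix (Fin M) (Fin M) ℝ := Matrix.of fun i j => Complex.normSq (W i j) with hSdef
  have hWW : W * star W = 1 := by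
    rw [hW, StarMul.star_mul, star_star]
    calc star U * V * (star V * U) = star U * (V * star V) * U := by simp [Matrix.mul_assoc]
    _ = 1 := by rw [hVV, Matrix.mul_one, hUU']
  have hWW' : star W * W = 1 := by
    rw [hW, StarMul.star_mul, star_star]
    calc star V * U * (star U * V) = star V * (U * star U) * V := by simp [Matrix.mul_assoc]
    _ = 1 := by rw [hUU, Matrix.mul_one, hVV']
  have hS : S ∈ doublyStochastic ℝ (Fin M) := by
    rw [mem_doublyStochastic_iff_sum]
    refine ⟨fun i j => Complex.normSq_nonneg _, fun i => ?_, fun j => ?_⟩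
    · have h := congrFun (congrFun hWW i) i
      simp only [Matrix.mul_apply, Matrix.star_apply, RCLike.star_def, Matrix.one_apply_eq] at h
      have h2 : ((∑ j, S i j : ℝ) : ℂ) = 1 := by
        push_cast
        rw [← h]
        congr 1 with j
        simp only [hSdef, Matrix.of_apply]
        rw [← Complex.mul_conj]
      exact_mod_cast h2
    · have h := congrFun (congrFun hWW' j) j
      simp only [Matrix.mul_apply, Matrix.star_apply, RCLike.star_def, Matrix.one_apply_eq] at h
      have h2 : ((∑ i, S i j : ℝ) : ℂ) = 1 := by
        push_cast
        rw [← h]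
        congr 1 with i
        simp only [hSdef, Matrix.of_apply]
        rw [← Complex.mul_conj, mul_comm]
      exact_mod_cast h2
  obtain ⟨w, hw0, hw1, hw2⟩ := exists_eq_sum_perm_of_mem_doublyStochastic hS
  have hSrep : ∀ i j, S i j = ∑ π : Equiv.Perm (Fin M), w π * (π.permMatrix ℝ) i j := by
    intro i j
    rw [← hw2]
    simp [Matrix.sum_apply]
  have hsum : ∑ i : Fin M, ∑ j : Fin M, lam i * mu j * S i j
      = ∑ π : Equiv.Perm (Fin M), w π * ∑ i : Fin M, lam i * mu (π i) := by
    have h1 : ∀ i, ∑ j, lam i * mu j * S i j = ∑ π : Equiv.Perm (Fin M), w π * (lam i * mu (π i)) := by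
      intro i
      simp_rw [hSrep, Finset.mul_sum]
      rw [Finset.sum_comm]
      apply Finset.sum_congr rfl
      intro π _
      simp only [Equiv.Perm.permMatrix, PEquiv.toMatrix_apply, Equiv.toPEquiv_apply,
        Option.mem_def, Option.some.injEq, mul_ite, mul_zero, mul_one, ite_mul, zero_mul]
      rw [Finset.sum_ite_eq]
      simp only [Finset.mem_univ, if_true]
      ring
    simp_rw [h1]
    rw [Finset.sum_comm]
    simp_rw [Finset.mul_sum]
  have hbound : ∑ m : Fin M, lam (σ m) * mu (τ m.rev)
      ≤ ∑ i : Fin M, ∑ j : Fin M, lam i * mu j * S i j := by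
    rw [hsum]
    calc ∑ m : Fin M, lam (σ m) * mu (τ m.rev)
        = ∑ π : Equiv.Perm (Fin M), w π * ∑ m : Fin M, lam (σ m) * mu (τ m.rev) := by
          rw [← Finset.sum_mul, hw1, one_mul]
    _ ≤ _ := by
          apply Finset.sum_le_sum
          intro π _
          exact mul_le_mul_of_nonneg_left (rearr_step M lam mu σ τ hσ hτ π) (hw0 π)
  rw [key2, Complex.ofReal_re]
  exact hbound
end

section
/- The η-transform of the Marčenko–Pastur law with ratio β satisfies η_MP(x,β) = 1 − φ(x,β)/(4x) where φ(x,β) = (√(x(1+√β)²+1) − √(x(1−√β)²+1))². In particular for β = 1, ∫_0^4 (1/(1+xt)) · √(t(4−t))/(2πt) dt = 1 − ((√(4x+1) − 1)²)/(4x) for x > 0. -/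
open Real

open MeasureTheory intervalIntegral Set

set_option maxHeartbeats 1000000 in
lemma sqrtJ (a b c : ℝ) (hab : a < b) (hac : 0 < a + c) :
    ∫ t in a..b, Real.sqrt ((t - a) * (b - t)) / (t + c)
      = π * ((a + b) / 2 + c - Real.sqrt ((a + c) * (b + c))) := by
  have hba : 0 < b - a := by linarith
  have hbc : 0 < b + c := by linarith
  set K : ℝ := (a + c) * (b + c) with hK
  have hKpos : 0 < K := mul_pos hac hbc
  set SK : ℝ := Real.sqrt K with hSK
  have hSKpos : 0 < SK := Real.sqrt_pos.2 hKpos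
  have hSK2 : SK ^ 2 = K := Real.sq_sqrt hKpos.le
  set G : ℝ → ℝ := fun t => Real.sqrt ((t - a) * (b - t))
      + ((a + b) / 2 + c) * Real.arcsin ((2 * t - a - b) / (b - a))
      + SK * Real.arcsin ((2 * K / (t + c) - (a + b + 2 * c)) / (b - a)) with hG
  have hcont : ContinuousOn G (Icc a b) := by
    apply ContinuousOn.add
    apply ContinuousOn.add
    · exact (Real.continuous_sqrt.comp (by continuity)).continuousOn
    · exact continuousOn_const.mul (Real.continuous_arcsin.comp (by continuity)).continuousOn
    · refine continuousOn_const.mul (Real.continuous_arcsin.comp_continuousOn ?_)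
      refine ContinuousOn.div ?_ continuousOn_const (fun t ht => hba.ne')
      refine ContinuousOn.sub ?_ continuousOn_const
      exact continuousOn_const.div (by fun_prop) (fun t ht => by nlinarith [ht.1])
  have hderiv : ∀ t ∈ Ioo a b,
      HasDerivAt G (Real.sqrt ((t - a) * (b - t)) / (t + c)) t := by
    intro t ht
    obtain ⟨hta, htb⟩ := ht
    have hu : 0 < t + c := by linarith
    have hs : 0 < (t - a) * (b - t) := mul_pos (by linarith) (by linarith)
    set S : ℝ := Real.sqrt ((t - a) * (b - t)) with hS
    have hSpos : 0 < S := Real.sqrt_pos.2 hs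
    have hS2 : S ^ 2 = (t - a) * (b - t) := Real.sq_sqrt hs.le
    -- term 1
    have hp : HasDerivAt (fun t : ℝ => (t - a) * (b - t)) (a + b - 2 * t) t := by
      have := ((hasDerivAt_id t).sub_const a).mul ((hasDerivAt_const t b).sub (hasDerivAt_id t))
      exact this.congr_deriv (by simp; ring)
    have h1 : HasDerivAt (fun t : ℝ => Real.sqrt ((t - a) * (b - t)))
        (1 / (2 * S) * (a + b - 2 * t)) t :=
      (Real.hasDerivAt_sqrt hs.ne').comp t hp
    -- term 2
    have hA1 : (2 * t - a - b) / (b - a) ≠ -1 := by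
      rw [ne_eq, div_eq_iff hba.ne']
      intro h; nlinarith
    have hA2 : (2 * t - a - b) / (b - a) ≠ 1 := by
      rw [ne_eq, div_eq_iff hba.ne']
      intro h; nlinarith
    have hlin : HasDerivAt (fun t : ℝ => (2 * t - a - b) / (b - a)) (2 / (b - a)) t := by
      have := ((((hasDerivAt_id t).const_mul 2).sub_const a).sub_const b).div_const (b - a)
      simpa using this
    have h2 : HasDerivAt (fun t : ℝ => Real.arcsin ((2 * t - a - b) / (b - a)))
        (1 / Real.sqrt (1 - ((2 * t - a - b) / (b - a)) ^ 2) * (2 / (b - a))) t :=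
      by exact (Real.hasDerivAt_arcsin hA1 hA2).comp t hlin
    have hsqA : Real.sqrt (1 - ((2 * t - a - b) / (b - a)) ^ 2) = 2 * S / (b - a) := by
      have he : 1 - ((2 * t - a - b) / (b - a)) ^ 2 = (2 * S / (b - a)) ^ 2 := by
        rw [div_pow, div_pow, mul_pow, hS2]
        field_simp
        ring
      rw [he, Real.sqrt_sq (by positivity)]
    -- term 3
    set w : ℝ := (2 * K / (t + c) - (a + b + 2 * c)) / (b - a) with hw
    have hw2 : 1 - w ^ 2 = (2 * SK * S / ((t + c) * (b - a))) ^ 2 := by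
      rw [hw, div_pow, div_pow, mul_pow, mul_pow, hS2, hSK2, hK]
      field_simp
      ring
    have hw2pos : 0 < 1 - w ^ 2 := by rw [hw2]; positivity
    have hwne1 : w ≠ 1 := by intro h; rw [h] at hw2pos; norm_num at hw2pos
    have hwne1' : w ≠ -1 := by intro h; rw [h] at hw2pos; norm_num at hw2pos
    have hwlin : HasDerivAt (fun t : ℝ => (2 * K / (t + c) - (a + b + 2 * c)) / (b - a))
        ((-(2 * K) / (t + c) ^ 2) / (b - a)) t := by
      have hu' : HasDerivAt (fun t : ℝ => t + c) 1 t := (hasDerivAt_id t).add_const c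
      have h0 := (((hasDerivAt_const t (2 * K)).div hu' hu.ne').sub_const
          (a + b + 2 * c)).div_const (b - a)
      exact h0.congr_deriv (by ring)
    have h3 : HasDerivAt (fun t : ℝ =>
        Real.arcsin ((2 * K / (t + c) - (a + b + 2 * c)) / (b - a)))
        (1 / Real.sqrt (1 - w ^ 2) * ((-(2 * K) / (t + c) ^ 2) / (b - a))) t :=
      by exact (Real.hasDerivAt_arcsin hwne1' hwne1).comp t hwlin
    have hsqW : Real.sqrt (1 - w ^ 2) = 2 * SK * S / ((t + c) * (b - a)) := by
      rw [hw2, Real.sqrt_sq (by positivity)]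
    -- combine
    have hbig := (h1.add (h2.const_mul ((a + b) / 2 + c))).add (h3.const_mul SK)
    refine hbig.congr_deriv ?_
    symm
    rw [hsqA, hsqW]
    have e2 : 1 / (2 * S / (b - a)) * (2 / (b - a)) = 1 / S := by
      rw [one_div_div]; field_simp
    have e3 : SK * (1 / (2 * SK * S / ((t + c) * (b - a))) * (-(2 * K) / (t + c) ^ 2 / (b - a)))
        = -(K / (S * (t + c))) := by
      rw [one_div_div]; field_simp
    rw [e2, e3]
    field_simp
    linear_combination 2 * hS2 + 2 * hK
  have hint : IntervalIntegrable (fun t => Real.sqrt ((t - a) * (b - t)) / (t + c))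
      volume a b := by
    apply ContinuousOn.intervalIntegrable
    apply ContinuousOn.div
    · exact (Real.continuous_sqrt.comp (by continuity)).continuousOn
    · fun_prop
    · intro t ht
      rw [uIcc_of_le hab.le] at ht
      nlinarith [ht.1]
  have hFTC := integral_eq_sub_of_hasDerivAt_of_le hab.le hcont hderiv hint
  rw [hFTC]
  have e1 : (2 * b - a - b) / (b - a) = 1 := by
    rw [div_eq_one_iff_eq hba.ne']; ring
  have e2 : (2 * a - a - b) / (b - a) = -1 := by
    rw [div_eq_iff hba.ne']; ring
  have e3 : (2 * K / (b + c) - (a + b + 2 * c)) / (b - a) = -1 := by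
    rw [div_eq_iff hba.ne', hK]
    field_simp
    ring
  have e4 : (2 * K / (a + c) - (a + b + 2 * c)) / (b - a) = 1 := by
    rw [div_eq_one_iff_eq hba.ne', hK]
    field_simp
    ring
  simp only [hG, e1, e2, e3, e4, Real.arcsin_one, Real.arcsin_neg_one]
  rw [show (b - a) * (b - b) = 0 by ring, show (a - a) * (b - a) = 0 by ring,
    Real.sqrt_zero, hSK, hK]
  ring


lemma sqrtJ0_integrable (b : ℝ) (hb : 0 < b) :
    IntervalIntegrable (fun t => Real.sqrt ((t - 0) * (b - t)) / t)
      volume 0 b := by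
  have h1 : IntervalIntegrable (fun t : ℝ => Real.sqrt b * t ^ (-(1:ℝ)/2)) volume 0 b :=
    (intervalIntegrable_rpow' (by norm_num)).const_mul _
  apply IntervalIntegrable.mono_fun h1
  · apply Measurable.aestronglyMeasurable
    exact (Real.continuous_sqrt.measurable.comp (by fun_prop)).div (by fun_prop)
  · rw [Filter.EventuallyLE, ae_restrict_iff' measurableSet_uIoc]
    filter_upwards with t ht
    rw [uIoc_of_le hb.le] at ht
    obtain ⟨ht0, htb⟩ := ht
    have hst : Real.sqrt ((t - 0) * (b - t)) ≤ Real.sqrt t * Real.sqrt b := by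
      rw [← Real.sqrt_mul ht0.le]
      apply Real.sqrt_le_sqrt
      nlinarith
    have htr : t ^ (-(1:ℝ)/2) = 1 / Real.sqrt t := by
      rw [show (-(1:ℝ)/2) = -(1/2) by norm_num, Real.rpow_neg ht0.le, ← Real.sqrt_eq_rpow,
        one_div]
    have hsq : Real.sqrt t * Real.sqrt t = t := Real.mul_self_sqrt ht0.le
    have hsp : 0 < Real.sqrt t := Real.sqrt_pos.2 ht0
    rw [Real.norm_eq_abs, Real.norm_eq_abs,
      abs_of_nonneg (by positivity), abs_of_nonneg (by positivity), htr]
    rw [div_le_iff₀ ht0]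
    calc Real.sqrt ((t - 0) * (b - t)) ≤ Real.sqrt t * Real.sqrt b := hst
      _ = Real.sqrt b * (1 / Real.sqrt t) * t := by
          field_simp
          linear_combination hsq

set_option maxHeartbeats 1000000 in
lemma sqrtJ0 (b : ℝ) (hb : 0 < b) :
    ∫ t in (0:ℝ)..b, Real.sqrt ((t - 0) * (b - t)) / t = π * (b / 2) := by
  set G : ℝ → ℝ := fun t => Real.sqrt ((t - 0) * (b - t))
      + b / 2 * Real.arcsin ((2 * t - b) / b) with hG
  have hcont : ContinuousOn G (Icc 0 b) := by
    apply ContinuousOn.add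
    · exact (Real.continuous_sqrt.comp (by continuity)).continuousOn
    · exact continuousOn_const.mul (Real.continuous_arcsin.comp (by continuity)).continuousOn
  have hderiv : ∀ t ∈ Ioo 0 b,
      HasDerivAt G (Real.sqrt ((t - 0) * (b - t)) / t) t := by
    intro t ht
    obtain ⟨hta, htb⟩ := ht
    have hs : 0 < (t - 0) * (b - t) := mul_pos (by linarith) (by linarith)
    set S : ℝ := Real.sqrt ((t - 0) * (b - t)) with hS
    have hSpos : 0 < S := Real.sqrt_pos.2 hs
    have hS2 : S ^ 2 = (t - 0) * (b - t) := Real.sq_sqrt hs.le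
    have hp : HasDerivAt (fun t : ℝ => (t - 0) * (b - t)) (b - 2 * t) t := by
      have := ((hasDerivAt_id t).sub_const 0).mul ((hasDerivAt_const t b).sub (hasDerivAt_id t))
      exact this.congr_deriv (by simp; ring)
    have h1 : HasDerivAt (fun t : ℝ => Real.sqrt ((t - 0) * (b - t)))
        (1 / (2 * S) * (b - 2 * t)) t :=
      (Real.hasDerivAt_sqrt hs.ne').comp t hp
    have hA1 : (2 * t - b) / b ≠ -1 := by
      rw [ne_eq, div_eq_iff hb.ne']
      intro h; nlinarith
    have hA2 : (2 * t - b) / b ≠ 1 := by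
      rw [ne_eq, div_eq_iff hb.ne']
      intro h; nlinarith
    have hlin : HasDerivAt (fun t : ℝ => (2 * t - b) / b) (2 / b) t := by
      have := (((hasDerivAt_id t).const_mul 2).sub_const b).div_const b
      simpa using this
    have h2 : HasDerivAt (fun t : ℝ => Real.arcsin ((2 * t - b) / b))
        (1 / Real.sqrt (1 - ((2 * t - b) / b) ^ 2) * (2 / b)) t :=
      by exact (Real.hasDerivAt_arcsin hA1 hA2).comp t hlin
    have hsqA : Real.sqrt (1 - ((2 * t - b) / b) ^ 2) = 2 * S / b := by
      have he : 1 - ((2 * t - b) / b) ^ 2 = (2 * S / b) ^ 2 := by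
        rw [div_pow, div_pow, mul_pow, hS2]
        field_simp
        ring
      rw [he, Real.sqrt_sq (by positivity)]
    have hbig := h1.add (h2.const_mul (b / 2))
    refine hbig.congr_deriv ?_
    symm
    rw [hsqA]
    have e2 : 1 / (2 * S / b) * (2 / b) = 1 / S := by
      rw [one_div_div]; field_simp
    rw [e2]
    field_simp
    linear_combination 2 * hS2
  have hint : IntervalIntegrable (fun t => Real.sqrt ((t - 0) * (b - t)) / t)
      volume 0 b := by
    exact sqrtJ0_integrable b hb
  have hFTC := integral_eq_sub_of_hasDerivAt_of_le hb.le hcont hderiv hint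
  rw [hFTC]
  have e1 : (2 * b - b) / b = 1 := by
    rw [div_eq_one_iff_eq hb.ne']; ring
  have e2 : (2 * 0 - b) / b = -1 := by
    rw [div_eq_iff hb.ne']; ring
  simp only [hG, e1, e2, Real.arcsin_one, Real.arcsin_neg_one]
  rw [show (b - 0) * (b - b) = 0 by ring, show (0 - 0) * (b - 0) = 0 by ring,
    Real.sqrt_zero]
  ring

lemma sqrtI (a b : ℝ) (ha : 0 ≤ a) (hab : a < b) :
    ∫ t in a..b, Real.sqrt ((t - a) * (b - t)) / t
      = π * ((a + b) / 2 - Real.sqrt (a * b)) := by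
  rcases eq_or_lt_of_le ha with h0 | h0
  · subst h0
    rw [sqrtJ0 b hab]
    simp
  · have := sqrtJ a b 0 hab (by simpa using h0)
    simp only [add_zero] at this
    rw [this]

lemma sqrtI_integrable (a b : ℝ) (ha : 0 ≤ a) (hab : a < b) :
    IntervalIntegrable (fun t => Real.sqrt ((t - a) * (b - t)) / t) volume a b := by
  rcases eq_or_lt_of_le ha with h0 | h0
  · subst h0
    exact sqrtJ0_integrable b hab
  · apply ContinuousOn.intervalIntegrable
    apply ContinuousOn.div
    · exact (Real.continuous_sqrt.comp (by continuity)).continuousOn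
    · fun_prop
    · intro t ht
      rw [uIcc_of_le hab.le] at ht
      nlinarith [ht.1]

lemma mp_eta (a b x : ℝ) (ha : 0 ≤ a) (hab : a < b) (hx : 0 < x) :
    ∫ t in a..b, (1 / (1 + x * t)) * (Real.sqrt ((t - a) * (b - t)) / (2 * π * t))
      = 1 / 2 * (Real.sqrt ((a + 1 / x) * (b + 1 / x)) - Real.sqrt (a * b) - 1 / x) := by
  have hinvx : 0 < 1 / x := by positivity
  have hEq : EqOn (fun t => (1 / (1 + x * t)) * (Real.sqrt ((t - a) * (b - t)) / (2 * π * t)))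
      (fun t => (2 * π)⁻¹ * (Real.sqrt ((t - a) * (b - t)) / t
        - Real.sqrt ((t - a) * (b - t)) / (t + 1 / x))) (uIcc a b) := by
    intro t ht
    rw [uIcc_of_le hab.le] at ht
    rcases eq_or_lt_of_le (le_trans ha ht.1) with h0 | h0
    · have ha0 : a = 0 := le_antisymm (h0 ▸ ht.1 : a ≤ 0) ha
      simp only [← h0, ha0]
      norm_num
    · have h1 : 0 < 1 + x * t := by positivity
      have h2 : 0 < t + 1 / x := by positivity
      have hπ : (0:ℝ) < π := Real.pi_pos
      field_simp
      ring
  rw [intervalIntegral.integral_congr hEq]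
  rw [intervalIntegral.integral_const_mul]
  rw [intervalIntegral.integral_sub (sqrtI_integrable a b ha hab)
      (by
        apply ContinuousOn.intervalIntegrable
        apply ContinuousOn.div
        · exact (Real.continuous_sqrt.comp (by continuity)).continuousOn
        · fun_prop
        · intro t ht
          rw [uIcc_of_le hab.le] at ht
          nlinarith [ht.1])]
  rw [sqrtI a b ha hab, sqrtJ a b (1 / x) hab (by positivity)]
  have hπ : (0:ℝ) < π := Real.pi_pos
  field_simp
  ring

theorem mp_eta_transform (x : ℝ) (hx : 0 < x) :
    (∀ β : ℝ, 1 ≤ β →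
      ∫ t in ((1 - Real.sqrt β) ^ 2)..((1 + Real.sqrt β) ^ 2),
          (1 / (1 + x * t)) *
            (Real.sqrt ((t - (1 - Real.sqrt β) ^ 2) * ((1 + Real.sqrt β) ^ 2 - t))
              / (2 * π * t))
        = 1 - (Real.sqrt (x * (1 + Real.sqrt β) ^ 2 + 1)
                - Real.sqrt (x * (1 - Real.sqrt β) ^ 2 + 1)) ^ 2 / (4 * x)) ∧
    (∫ t in (0 : ℝ)..4,
        (1 / (1 + x * t)) * (Real.sqrt (t * (4 - t)) / (2 * π * t))
      = 1 - (Real.sqrt (4 * x + 1) - 1) ^ 2 / (4 * x)) := by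
  constructor
  · intro β hβ
    have hβ0 : (0:ℝ) ≤ β := by linarith
    set r : ℝ := Real.sqrt β with hrdef
    have hr1 : 1 ≤ r := by
      rw [hrdef, show (1:ℝ) = Real.sqrt 1 by simp]
      exact Real.sqrt_le_sqrt hβ
    have hr2 : r ^ 2 = β := Real.sq_sqrt hβ0
    set a : ℝ := (1 - r) ^ 2 with hadef
    set b : ℝ := (1 + r) ^ 2 with hbdef
    have ha : 0 ≤ a := sq_nonneg _
    have hab : a < b := by rw [hadef, hbdef]; nlinarith
    rw [mp_eta a b x ha hab hx]
    -- algebra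
    have hP2 : Real.sqrt (x * a + 1) ^ 2 = x * a + 1 := Real.sq_sqrt (by positivity)
    have hQ2 : Real.sqrt (x * b + 1) ^ 2 = x * b + 1 := Real.sq_sqrt (by positivity)
    have hPpos : 0 < Real.sqrt (x * a + 1) := Real.sqrt_pos.2 (by positivity)
    have hQpos : 0 < Real.sqrt (x * b + 1) := Real.sqrt_pos.2 (by positivity)
    have hsab : Real.sqrt (a * b) = β - 1 := by
      rw [show a * b = (β - 1) ^ 2 by rw [hadef, hbdef]; nlinarith [hr2]]
      rw [Real.sqrt_sq_eq_abs, abs_of_nonneg (by linarith)]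
    have hsPQ : Real.sqrt ((a + 1 / x) * (b + 1 / x))
        = Real.sqrt (x * a + 1) * Real.sqrt (x * b + 1) / x := by
      rw [show (a + 1 / x) * (b + 1 / x) = ((x * a + 1) * (x * b + 1)) / x ^ 2 by
        field_simp]
      rw [Real.sqrt_div (by positivity), Real.sqrt_sq hx.le,
        Real.sqrt_mul (by positivity)]
    rw [hsab, hsPQ]
    have hab2 : a + b = 2 + 2 * β := by rw [hadef, hbdef]; nlinarith [hr2]
    field_simp
    linear_combination 2*hP2 + 2*hQ2 + 2*x*hab2
  · have := mp_eta 0 4 x le_rfl (by norm_num) hx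
    simp only [sub_zero] at this
    rw [this]
    have hQ2 : Real.sqrt (4 * x + 1) ^ 2 = 4 * x + 1 := Real.sq_sqrt (by positivity)
    have hsPQ : Real.sqrt ((0 + 1 / x) * (4 + 1 / x)) = Real.sqrt (4 * x + 1) / x := by
      rw [show (0 + 1 / x) * (4 + 1 / x) = (4 * x + 1) / x ^ 2 by
        rw [eq_div_iff (by positivity : (x:ℝ) ^ 2 ≠ 0)]; field_simp [hx.ne']; ring]
      rw [Real.sqrt_div (by positivity), Real.sqrt_sq hx.le]
    rw [hsPQ]
    rw [show (0:ℝ) * 4 = 0 by ring, Real.sqrt_zero]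
    field_simp
    linear_combination 2*hQ2
end
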